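/- Let g₁, …, g_ℓ be linearly independent homogeneous real polynomials in k variables, with gᵢ homogeneous of degree dᵢ. Then there exists C > 0 depending only on g₁, …, g_ℓ such that for all R ≥ 1, all ε > 0, and all real coefficients x₁, …, x_ℓ: if |∑ᵢ xᵢ gᵢ(s)| < ε for every s ∈ [−R, R]^k, then |xᵢ| < C ε R^{−dᵢ} for every i. -/

import Mathlib

open MvPolynomial

theorem eval_smul_of_isHom {k : ℕ} (φ : MvPolynomial (Fin k) ℝ) (n : ℕ)
    (h : φ.IsHomogeneous n) (c : ℝ) (s : Fin k → ℝ) :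
    eval (c • s) φ = c ^ n * eval s φ := by
  rw [eval_eq, eval_eq, Finset.mul_sum]
  apply Finset.sum_congr rfl
  intro d hd
  have hdeg : d.degree = n := by
    have := h (mem_support_iff.mp hd)
    rwa [Finsupp.degree_eq_weight_one]
  have : ∏ i ∈ d.support, (c • s) i ^ d i
      = c ^ n * ∏ i ∈ d.support, s i ^ d i := by
    simp only [Pi.smul_apply, smul_eq_mul, mul_pow]
    rw [Finset.prod_mul_distrib, Finset.prod_pow_eq_pow_sum]
    rw [show ∑ i ∈ d.support, d i = n from hdeg]
  rw [this]; ring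

/-- Coefficient decay for linearly independent homogeneous polynomials: if the
combination `∑ xᵢ gᵢ` is `< ε` in absolute value on the cube `[-R, R]^k`, then
each coefficient satisfies `|xᵢ| < C ε R^{-dᵢ}`. -/
theorem stmt4 (k ℓ : ℕ) (g : Fin ℓ → MvPolynomial (Fin k) ℝ) (d : Fin ℓ → ℕ)
    (hhom : ∀ i, (g i).IsHomogeneous (d i))
    (hind : LinearIndependent ℝ g) :
    ∃ C > 0, ∀ R : ℝ, 1 ≤ R → ∀ ε > 0, ∀ x : Fin ℓ → ℝ,
      (∀ s : Fin k → ℝ, (∀ j, |s j| ≤ R) →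
        |∑ i, x i * MvPolynomial.eval s (g i)| < ε) →
      ∀ i, |x i| < C * ε / R ^ (d i) := by
  set φ : (Fin k → ℝ) → ((Fin ℓ → ℝ) →ₗ[ℝ] ℝ) :=
    fun s => ∑ m, MvPolynomial.eval s (g m) • LinearMap.proj m with hφ
  have φ_apply : ∀ s y, φ s y = ∑ m, y m * MvPolynomial.eval s (g m) := by
    intro s y
    simp [hφ, LinearMap.sum_apply, mul_comm]
  have hspan : Submodule.span ℝ (Set.range φ) = ⊤ := by
    apply Submodule.span_eq_top_of_ne_zero
    intro z hz
    by_contra hc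
    push_neg at hc
    have hz0 : ∀ s, φ s z = 0 := fun s => hc _ ⟨s, rfl⟩
    have hpoly : (∑ m, z m • g m) = 0 := by
      apply MvPolynomial.funext
      intro s
      rw [map_sum, map_zero]
      have := hz0 s
      rw [φ_apply] at this
      simpa [smul_eq_mul, mul_comm] using this
    have := Fintype.linearIndependent_iff.mp hind z (by simpa using hpoly)
    exact hz (funext fun i => this i)
  have hmem : ∀ i : Fin ℓ, ∃ a : (Fin k → ℝ) →₀ ℝ,
      (a.sum fun t α => α • φ t) = LinearMap.proj i := by
    intro i
    have : (LinearMap.proj i : (Fin ℓ → ℝ) →ₗ[ℝ] ℝ) ∈ Submodule.span ℝ (Set.range φ) := by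
      rw [hspan]; trivial
    exact (Finsupp.mem_span_range_iff_exists_finsupp).mp this
  choose a ha using hmem
  set M : Fin ℓ → ℝ := fun i => 1 + ∑ t ∈ (a i).support, ∑ j, |t j| with hM
  have hM1 : ∀ i, 1 ≤ M i := by
    intro i
    have : (0:ℝ) ≤ ∑ t ∈ (a i).support, ∑ j, |t j| :=
      Finset.sum_nonneg fun t _ => Finset.sum_nonneg fun j _ => abs_nonneg _
    simp only [hM]; linarith
  have hMt : ∀ i, ∀ t ∈ (a i).support, ∀ j, |t j| ≤ M i := by
    intro i t ht j
    have h1 : |t j| ≤ ∑ j', |t j'| :=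
      Finset.single_le_sum (f := fun j' => |t j'|) (fun j' _ => abs_nonneg _) (Finset.mem_univ j)
    have h2 : ∑ j', |t j'| ≤ ∑ t' ∈ (a i).support, ∑ j', |t' j'| :=
      Finset.single_le_sum (f := fun t' => ∑ j', |t' j'|)
        (fun t' _ => Finset.sum_nonneg fun j' _ => abs_nonneg _) ht
    simp only [hM]; linarith
  have hMpos : ∀ i, 0 < M i := fun i => lt_of_lt_of_le one_pos (hM1 i)
  set B : Fin ℓ → ℝ := fun i => (M i) ^ (d i) * ∑ t ∈ (a i).support, |a i t| with hB
  have hBnn : ∀ i, 0 ≤ B i := fun i =>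
    mul_nonneg (pow_nonneg (hMpos i).le _) (Finset.sum_nonneg fun t _ => abs_nonneg _)
  refine ⟨(∑ i, B i) + 1, by positivity, ?_⟩
  intro R hR ε hε x hx i
  have hRpos : (0:ℝ) < R := lt_of_lt_of_le one_pos hR
  set c : ℝ := (M i)⁻¹ with hc
  have hcpos : 0 < c := inv_pos.mpr (hMpos i)
  have key : (c * R) ^ (d i) * x i
      = ∑ t ∈ (a i).support, a i t * (∑ m, x m * MvPolynomial.eval ((c * R) • t) (g m)) := by
    have h0 := congrArg (fun L : (Fin ℓ → ℝ) →ₗ[ℝ] ℝ =>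
      L (fun m => (c * R) ^ (d m) * x m)) (ha i)
    simp only [LinearMap.proj_apply] at h0
    rw [Finsupp.sum] at h0
    rw [LinearMap.coe_sum, Finset.sum_apply] at h0
    rw [← h0]
    apply Finset.sum_congr rfl
    intro t ht
    rw [LinearMap.smul_apply, smul_eq_mul, φ_apply]
    congr 1
    apply Finset.sum_congr rfl
    intro m _
    rw [eval_smul_of_isHom (g m) (d m) (hhom m)]
    ring
  have hpt : ∀ t ∈ (a i).support, |∑ m, x m * MvPolynomial.eval ((c * R) • t) (g m)| < ε := by
    intro t ht
    apply hx
    intro j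
    have h1 : |t j| ≤ M i := hMt i t ht j
    have habs : |((c * R) • t) j| = c * R * |t j| := by
      rw [Pi.smul_apply, smul_eq_mul, abs_mul, abs_of_pos (mul_pos hcpos hRpos)]
    rw [habs]
    calc c * R * |t j| ≤ c * R * M i := by
          exact mul_le_mul_of_nonneg_left h1 (mul_pos hcpos hRpos).le
      _ = R := by rw [hc]; field_simp; exact div_self (hMpos i).ne'
  have hMc : M i ^ (d i) * c ^ (d i) = 1 := by
    rw [hc, ← mul_pow, mul_inv_cancel₀ (hMpos i).ne', one_pow]
  have h1 : (c * R) ^ (d i) * |x i| ≤ (∑ t ∈ (a i).support, |a i t|) * ε := by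
    have h2 : |(c * R) ^ (d i) * x i| ≤ ∑ t ∈ (a i).support, |a i t| * ε := by
      rw [key]
      refine le_trans (Finset.abs_sum_le_sum_abs _ _) ?_
      apply Finset.sum_le_sum
      intro t ht
      rw [abs_mul]
      exact mul_le_mul_of_nonneg_left (hpt t ht).le (abs_nonneg _)
    rw [abs_mul, abs_of_pos (pow_pos (mul_pos hcpos hRpos) _)] at h2
    rwa [← Finset.sum_mul] at h2
  have e : R ^ (d i) * |x i| = M i ^ (d i) * ((c * R) ^ (d i) * |x i|) := by
    rw [mul_pow]
    linear_combination (-(R ^ (d i) * |x i|)) * hMc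
  have h2 : R ^ (d i) * |x i| ≤ B i * ε := by
    rw [e]
    calc M i ^ (d i) * ((c * R) ^ (d i) * |x i|)
        ≤ M i ^ (d i) * ((∑ t ∈ (a i).support, |a i t|) * ε) :=
          mul_le_mul_of_nonneg_left h1 (pow_nonneg (hMpos i).le _)
      _ = B i * ε := by rw [hB]; ring
  have habs : |x i| ≤ B i * ε / R ^ (d i) :=
    (le_div_iff₀ (pow_pos hRpos _)).mpr (by rw [mul_comm]; exact h2)
  calc |x i| ≤ B i * ε / R ^ (d i) := habs
    _ ≤ (∑ i, B i) * ε / R ^ (d i) := by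
        gcongr
        exact Finset.single_le_sum (fun j _ => hBnn j) (Finset.mem_univ i)
    _ < ((∑ i, B i) + 1) * ε / R ^ (d i) := by
        apply (div_lt_div_iff_of_pos_right (pow_pos hRpos _)).mpr
        nlinarith [Finset.sum_nonneg (fun j (_ : j ∈ Finset.univ) => hBnn j)]
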